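/- Let n ≥ 1 and 0 ≤ t ≤ C(n,2) be integers. Then I_n(t) = C(n+t, t) − C(n+t−1, t−1) + ∑_{j=1}^{n} ∑_{k=C(j+1,2)}^{C(n+1,2)} (−1)^j · D(n,j,k) · ( C₀(t − k + n, n) − C₀(t − k + n − 1, n) ), where D(n,j,k) is the number of j-element subsets of {1,…,n} whose elements sum to k, and C₀(a,b) denotes the restricted binomial coefficient which equals C(a,b) when a ≥ b and 0 otherwise. -/

import Mathlib

/-- The number of inversions of a permutation of `Fin n`. -/
def invCount {n : ℕ} (π : Equiv.Perm (Fin n)) : ℕ :=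
  ((Finset.univ : Finset (Fin n × Fin n)).filter
    (fun p => p.1 < p.2 ∧ π p.2 < π p.1)).card

/-- `I n t`: the number of permutations of `{1,…,n}` with exactly `t` inversions. -/
def invNum (n t : ℕ) : ℕ :=
  ((Finset.univ : Finset (Equiv.Perm (Fin n))).filter (fun π => invCount π = t)).card

/-- `D n j k`: the number of `j`-element subsets of `{1,…,n}` whose elements sum to `k`. -/
def subsetSumCount (n j k : ℕ) : ℕ :=
  ((Finset.powersetCard j (Finset.Icc 1 n)).filter (fun s => ∑ i ∈ s, i = k)).card

/-- Restricted binomial coefficient: `C₀(a,b) = C(a,b)` when `a ≥ b`, and `0` otherwise.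
Here also `b` is an integer; the value is `0` when `b < 0`. -/
def C0 (a : ℤ) (b : ℤ) : ℤ :=
  if 0 ≤ b ∧ b ≤ a then ((a.toNat).choose b.toNat : ℤ) else 0

open Finset Equiv


def phi {n : ℕ} (p : Fin (n+1)) (e : Equiv.Perm (Fin n)) : Equiv.Perm (Fin (n+1)) :=
  (finSuccEquiv' 0).trans ((e.optionCongr).trans (finSuccEquiv' p).symm)

lemma phi_zero {n : ℕ} (p : Fin (n+1)) (e : Equiv.Perm (Fin n)) : phi p e 0 = p := by
  simp [phi, finSuccEquiv'_at]

lemma phi_succ {n : ℕ} (p : Fin (n+1)) (e : Equiv.Perm (Fin n)) (i : Fin n) :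
    phi p e i.succ = p.succAbove (e i) := by
  have h0 : finSuccEquiv' (0 : Fin (n+1)) i.succ = some i := by
    have := finSuccEquiv'_succAbove (0 : Fin (n+1)) i
    simpa [Fin.succAbove] using this
  simp [phi, h0, finSuccEquiv'_symm_some]

lemma card_fin_lt {n : ℕ} (p : Fin (n+1)) :
    (Finset.univ.filter (fun y : Fin n => (y : ℕ) < (p : ℕ))).card = (p : ℕ) := by
  have : (Finset.univ.filter (fun y : Fin n => (y : ℕ) < (p : ℕ))) =
      (Finset.range (p : ℕ)).attachFin (fun m hm => lt_of_lt_of_le (Finset.mem_range.mp hm)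
        (Nat.lt_succ_iff.mp p.isLt)) := by
    ext y
    simp [Finset.mem_attachFin, Fin.ext_iff]
  rw [this, Finset.card_attachFin, Finset.card_range]

lemma succAbove_lt_self_iff {n : ℕ} (p : Fin (n+1)) (x : Fin n) :
    p.succAbove x < p ↔ (x : ℕ) < (p : ℕ) := by
  rcases lt_or_ge (Fin.castSucc x) p with h | h
  · rw [Fin.succAbove_of_castSucc_lt _ _ h]
    simp [Fin.lt_def]
  · rw [Fin.succAbove_of_le_castSucc _ _ h]
    simp only [Fin.le_def, Fin.coe_castSucc] at h
    simp only [Fin.lt_def, Fin.val_succ]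
    omega

lemma invCount_phi {n : ℕ} (p : Fin (n+1)) (e : Equiv.Perm (Fin n)) :
    invCount (phi p e) = (p : ℕ) + invCount e := by
  classical
  set σ := phi p e with hσ
  set S : Finset (Fin (n+1) × Fin (n+1)) :=
    Finset.univ.filter (fun q => q.1 < q.2 ∧ σ q.2 < σ q.1) with hS
  have hsplit : S.card = (S.filter (fun q => q.1 = 0)).card
      + (S.filter (fun q => ¬ q.1 = 0)).card :=
    (Finset.card_filter_add_card_filter_not _).symm
  have hA : (S.filter (fun q => q.1 = 0)).card = (p : ℕ) := by
    have hA1 : (S.filter (fun q => q.1 = 0)).card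
        = (Finset.univ.filter (fun j : Fin n => (e j : ℕ) < (p : ℕ))).card := by
      refine Finset.card_bij' (fun q hq => q.2.pred (by
          simp only [hS, Finset.mem_filter, Finset.mem_univ, true_and] at hq
          exact Fin.pos_iff_ne_zero.mp (hq.2 ▸ hq.1.1 : (0 : Fin (n+1)) < q.2)))
        (fun j _ => ((0 : Fin (n+1)), j.succ)) ?_ ?_ ?_ ?_
      · intro q hq
        simp only [hS, Finset.mem_filter, Finset.mem_univ, true_and] at hq ⊢
        obtain ⟨⟨hlt, hinv⟩, h0⟩ := hq
        rw [← succAbove_lt_self_iff p]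
        rw [← phi_succ p e, Fin.succ_pred]
        rw [h0] at hinv
        rwa [phi_zero] at hinv
      · intro j hj
        simp only [Finset.mem_filter, Finset.mem_univ, true_and] at hj
        simp only [hS, Finset.mem_filter, Finset.mem_univ, true_and]
        refine ⟨⟨Fin.succ_pos j, ?_⟩, trivial⟩
        show phi p e j.succ < phi p e 0
        rw [phi_zero, phi_succ]
        exact (succAbove_lt_self_iff p _).mpr hj
      · intro q hq
        simp only [hS, Finset.mem_filter, Finset.mem_univ, true_and] at hq
        rw [Prod.ext_iff]
        exact ⟨hq.2.symm, by simp [Fin.succ_pred]⟩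
      · intro j hj
        simp [Fin.pred_succ]
    have hA2 : (Finset.univ.filter (fun j : Fin n => (e j : ℕ) < (p : ℕ))).card
        = (Finset.univ.filter (fun y : Fin n => (y : ℕ) < (p : ℕ))).card := by
      refine Finset.card_bij' (fun j _ => e j) (fun y _ => e.symm y) ?_ ?_ ?_ ?_
      · intro j hj
        simpa using (Finset.mem_filter.mp hj).2
      · intro y hy
        simp only [Finset.mem_filter, Finset.mem_univ, true_and] at hy ⊢
        simpa using hy
      · intro j _; simp
      · intro y _; simp
    rw [hA1, hA2, card_fin_lt]
  have hB : (S.filter (fun q => ¬ q.1 = 0)).card = invCount e := by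
    unfold invCount
    refine Finset.card_bij' (fun q hq => ((q.1.pred (by
        simp only [hS, Finset.mem_filter, Finset.mem_univ, true_and] at hq
        exact hq.2)), (q.2.pred (by
        simp only [hS, Finset.mem_filter, Finset.mem_univ, true_and] at hq
        refine Fin.pos_iff_ne_zero.mp ?_
        exact lt_of_le_of_lt (Fin.zero_le _) hq.1.1))))
      (fun q _ => (q.1.succ, q.2.succ)) ?_ ?_ ?_ ?_
    · intro q hq
      simp only [hS, Finset.mem_filter, Finset.mem_univ, true_and] at hq ⊢
      obtain ⟨⟨hlt, hinv⟩, h1⟩ := hq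
      constructor
      · rw [← Fin.succ_lt_succ_iff, Fin.succ_pred, Fin.succ_pred]
        exact hlt
      · rw [← Fin.succAbove_lt_succAbove_iff (p := p), ← phi_succ p e, ← phi_succ p e,
          Fin.succ_pred, Fin.succ_pred]
        exact hinv
    · intro q hq
      simp only [Finset.mem_filter, Finset.mem_univ, true_and] at hq
      simp only [hS, Finset.mem_filter, Finset.mem_univ, true_and]
      refine ⟨⟨Fin.succ_lt_succ_iff.mpr hq.1, ?_⟩, Fin.succ_ne_zero _⟩
      rw [phi_succ, phi_succ]
      exact Fin.succAbove_lt_succAbove_iff.mpr hq.2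
    · intro q hq
      rw [Prod.ext_iff]
      constructor <;> apply Fin.succ_pred <;>
        simp only [hS, Finset.mem_filter, Finset.mem_univ, true_and] at hq
      · exact hq.2
      · refine Fin.pos_iff_ne_zero.mp ?_
        exact lt_of_le_of_lt (Fin.zero_le _) hq.1.1
    · intro q hq
      rw [Prod.ext_iff]
      exact ⟨Fin.pred_succ _ (h := Fin.succ_ne_zero _), Fin.pred_succ _ (h := Fin.succ_ne_zero _)⟩
  show S.card = _
  rw [hsplit, hA, hB]

lemma phi_injective {n : ℕ} :
    Function.Injective (fun pe : Fin (n+1) × Equiv.Perm (Fin n) => phi pe.1 pe.2) := by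
  rintro ⟨p, e⟩ ⟨p', e'⟩ h
  simp only at h
  have hp : p = p' := by
    have h0 := congrArg (fun f : Equiv.Perm (Fin (n+1)) => f 0) h
    simpa [phi_zero] using h0
  subst hp
  have he : e = e' := by
    ext i
    have hi := congrArg (fun f : Equiv.Perm (Fin (n+1)) => f i.succ) h
    simp only [phi_succ] at hi
    have := (Fin.strictMono_succAbove p).injective hi
    exact congrArg Fin.val this
  rw [he]

lemma phi_surjective {n : ℕ} :
    Function.Surjective (fun pe : Fin (n+1) × Equiv.Perm (Fin n) => phi pe.1 pe.2) := by
  have hcard : Fintype.card (Fin (n+1) × Equiv.Perm (Fin n))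
      = Fintype.card (Equiv.Perm (Fin (n+1))) := by
    simp [Fintype.card_perm, Nat.factorial_succ]
  exact ((Fintype.bijective_iff_injective_and_card _).mpr ⟨phi_injective, hcard⟩).2

lemma invNum_succ (n t : ℕ) :
    invNum (n+1) t = ∑ m ∈ Finset.range (n+1), if m ≤ t then invNum n (t - m) else 0 := by
  classical
  have step1 : invNum (n+1) t = (Finset.univ.filter
      (fun pe : Fin (n+1) × Equiv.Perm (Fin n) => (pe.1 : ℕ) + invCount pe.2 = t)).card := by
    unfold invNum
    refine (Finset.card_bij (fun pe _ => phi pe.1 pe.2) ?_ ?_ ?_).symm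
    · intro pe hpe
      simp only [Finset.mem_filter, Finset.mem_univ, true_and] at hpe ⊢
      rw [invCount_phi]
      exact hpe
    · intro a ha b hb h
      exact phi_injective h
    · intro σ hσ
      obtain ⟨pe, rfl⟩ := phi_surjective σ
      refine ⟨pe, Finset.mem_filter.mpr ⟨Finset.mem_univ _, ?_⟩, rfl⟩
      have := (Finset.mem_filter.mp hσ).2
      rwa [invCount_phi] at this
  rw [step1, Finset.card_filter, Fintype.sum_prod_type, ← Fin.sum_univ_eq_sum_range]
  refine Finset.sum_congr rfl ?_
  intro p _
  by_cases hp : (p : ℕ) ≤ t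
  · rw [if_pos hp]
    unfold invNum
    rw [Finset.card_filter]
    refine Finset.sum_congr rfl ?_
    intro e _
    congr 1
    simp only [eq_iff_iff]
    show (p : ℕ) + invCount e = t ↔ invCount e = t - (p : ℕ)
    omega
  · rw [if_neg hp]
    refine Finset.sum_eq_zero ?_
    intro e _
    have hne : ¬ ((p : ℕ) + invCount e = t) := by omega
    exact if_neg hne

open PowerSeries in
noncomputable def Qs (n : ℕ) : PowerSeries ℤ :=
  ∏ i ∈ Finset.range n, ∑ m ∈ Finset.range (i+1), (X : PowerSeries ℤ)^m

lemma invNum_eq_coeff (n t : ℕ) : (invNum n t : ℤ) = PowerSeries.coeff t (Qs n) := by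
  induction n generalizing t with
  | zero =>
    have h1 : invNum 0 t = if t = 0 then 1 else 0 := by
      unfold invNum invCount
      have huniv : (Finset.univ : Finset (Fin 0 × Fin 0)) = ∅ := by simp
      simp only [huniv, Finset.filter_empty, Finset.card_empty]
      by_cases h : t = 0
      · subst h; simp [Finset.filter_true_of_mem, Finset.card_univ]
      · simp [h, Finset.filter_eq_empty_iff]
        omega
    rw [h1]
    simp only [Qs, Finset.range_zero, Finset.prod_empty]
    rw [PowerSeries.coeff_one]
    by_cases h : t = 0 <;> simp [h]
  | succ n ih =>
    have hQ : Qs (n+1) = Qs n * ∑ m ∈ Finset.range (n+1), (PowerSeries.X : PowerSeries ℤ)^m := by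
      rw [Qs, Finset.prod_range_succ]; rfl
    rw [hQ, Finset.mul_sum, map_sum, invNum_succ]
    push_cast
    refine Finset.sum_congr rfl ?_
    intro m _
    rw [PowerSeries.coeff_mul_X_pow']
    by_cases h : m ≤ t
    · rw [if_pos h, if_pos h, ih]
    · rw [if_neg h, if_neg h]

noncomputable def Rs (n : ℕ) : PowerSeries ℤ :=
  ∏ i ∈ Finset.range n, (1 - (PowerSeries.X : PowerSeries ℤ)^(i+1))

lemma oneSub_mul_Qs (n : ℕ) :
    (1 - (PowerSeries.X : PowerSeries ℤ))^n * Qs n = Rs n := by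
  rw [Qs, Rs]
  rw [show ((1 - (PowerSeries.X : PowerSeries ℤ))^n)
      = ∏ _i ∈ Finset.range n, (1 - (PowerSeries.X : PowerSeries ℤ)) by
    rw [Finset.prod_const, Finset.card_range]]
  rw [← Finset.prod_mul_distrib]
  refine Finset.prod_congr rfl ?_
  intro i _
  linear_combination (-1 : PowerSeries ℤ) * geom_sum_mul (PowerSeries.X : PowerSeries ℤ) (i+1)

open PowerSeries in
lemma Qs_eq (n : ℕ) : Qs n = Rs n * (invOneSubPow ℤ n).val := by
  have hu : ((invOneSubPow ℤ n).inv : PowerSeries ℤ) = (1 - X)^n :=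
    invOneSubPow_inv_eq_one_sub_pow ℤ n
  calc Qs n = ((invOneSubPow ℤ n).inv * (invOneSubPow ℤ n).val) * Qs n := by
        rw [(invOneSubPow ℤ n).inv_val, one_mul]
    _ = ((invOneSubPow ℤ n).inv * Qs n) * (invOneSubPow ℤ n).val := by ring
    _ = Rs n * (invOneSubPow ℤ n).val := by rw [hu, oneSub_mul_Qs]

open PowerSeries in
lemma coeff_Qs (n t : ℕ) (hn : 0 < n) :
    PowerSeries.coeff t (Qs n) = ∑ k ∈ Finset.range (t+1),
      PowerSeries.coeff k (Rs n) * ((n - 1 + (t - k)).choose (n-1) : ℤ) := by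
  rw [Qs_eq, PowerSeries.coeff_mul, Finset.Nat.sum_antidiagonal_eq_sum_range_succ_mk]
  refine Finset.sum_congr rfl ?_
  intro k hk
  congr 1
  rw [invOneSubPow_val_eq_mk_sub_one_add_choose_of_pos ℤ n hn, PowerSeries.coeff_mk]

lemma Rs_eq (n : ℕ) : Rs n = ∑ S ∈ (Finset.range n).powerset,
    (-1 : PowerSeries ℤ)^S.card * (PowerSeries.X)^(∑ i ∈ S, (i+1)) := by
  rw [Rs]
  rw [show (∏ i ∈ Finset.range n, (1 - (PowerSeries.X : PowerSeries ℤ)^(i+1)))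
      = ∏ i ∈ Finset.range n, ((-(PowerSeries.X : PowerSeries ℤ)^(i+1)) + 1) by
    refine Finset.prod_congr rfl ?_; intro i _; ring]
  rw [Finset.prod_add]
  refine Finset.sum_congr rfl ?_
  intro S _
  rw [Finset.prod_const_one, mul_one]
  rw [show (∏ i ∈ S, (-(PowerSeries.X : PowerSeries ℤ)^(i+1)))
      = ∏ i ∈ S, ((-1 : PowerSeries ℤ) * (PowerSeries.X)^(i+1)) by
    refine Finset.prod_congr rfl ?_; intro i _; ring]
  rw [Finset.prod_mul_distrib, Finset.prod_const, Finset.prod_pow_eq_pow_sum]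

lemma coeff_Rs (n k : ℕ) : PowerSeries.coeff k (Rs n) =
    ∑ S ∈ (Finset.range n).powerset,
      (if k = ∑ i ∈ S, (i+1) then ((-1 : ℤ))^S.card else 0) := by
  rw [Rs_eq, map_sum]
  refine Finset.sum_congr rfl ?_
  intro S _
  rw [show ((-1 : PowerSeries ℤ))^S.card = PowerSeries.C ((-1 : ℤ)^S.card) by
    rw [map_pow, map_neg, map_one]]
  rw [PowerSeries.coeff_C_mul_X_pow]


lemma coeff_Rs_D (n k : ℕ) : PowerSeries.coeff k (Rs n) =
    ∑ j ∈ Finset.range (n+1), (-1 : ℤ)^j * (subsetSumCount n j k : ℤ) := by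
  classical
  have hD : ∀ j, (subsetSumCount n j k : ℤ)
      = ∑ s ∈ Finset.powersetCard j (Finset.Icc 1 n),
          (if ∑ i ∈ s, i = k then (1:ℤ) else 0) := by
    intro j
    rw [subsetSumCount, Finset.card_filter]
    push_cast
    rfl
  have h1 : ∀ j, ((-1:ℤ)^j * (subsetSumCount n j k : ℤ))
      = ∑ s ∈ Finset.powersetCard j (Finset.Icc 1 n),
          (if ∑ i ∈ s, i = k then ((-1:ℤ))^s.card else 0) := by
    intro j
    rw [hD j, Finset.mul_sum]
    refine Finset.sum_congr rfl ?_
    intro s hs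
    have hc : s.card = j := (Finset.mem_powersetCard.mp hs).2
    rw [← hc]
    split_ifs <;> ring
  rw [Finset.sum_congr rfl (fun j _ => h1 j)]
  have h2 : ∀ j ∈ Finset.range (n+1), Finset.powersetCard j (Finset.Icc 1 n)
      = ((Finset.Icc 1 n).powerset).filter (fun s => s.card = j) := fun j _ =>
    Finset.powersetCard_eq_filter
  rw [Finset.sum_congr rfl (fun j hj =>
    Finset.sum_congr (h2 j hj) (fun s _ => rfl))]
  rw [Finset.sum_fiberwise_of_maps_to (fun s hs => by
    rw [Finset.mem_range, Nat.lt_succ_iff]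
    calc s.card ≤ (Finset.Icc 1 n).card := Finset.card_le_card (Finset.mem_powerset.mp hs)
    _ = n := by rw [Nat.card_Icc]; omega)]
  rw [coeff_Rs]
  refine Finset.sum_nbij' (fun S => S.image (· + 1)) (fun s => s.image (· - 1))
    ?_ ?_ ?_ ?_ ?_
  · intro S hS
    rw [Finset.mem_powerset] at hS ⊢
    intro x hx
    obtain ⟨y, hy, rfl⟩ := Finset.mem_image.mp hx
    have := Finset.mem_range.mp (hS hy)
    rw [Finset.mem_Icc]
    omega
  · intro s hs
    rw [Finset.mem_powerset] at hs ⊢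
    intro x hx
    obtain ⟨y, hy, rfl⟩ := Finset.mem_image.mp hx
    have := Finset.mem_Icc.mp (hs hy)
    rw [Finset.mem_range]
    omega
  · intro S hS
    rw [Finset.mem_powerset] at hS
    show Finset.image (fun x => x - 1) (Finset.image (fun x => x + 1) S) = S
    rw [Finset.image_image]
    ext x
    simp only [Finset.mem_image, Function.comp_apply]
    constructor
    · rintro ⟨y, hy, rfl⟩
      simpa using hy
    · intro hx
      exact ⟨x, hx, by omega⟩
  · intro s hs
    rw [Finset.mem_powerset] at hs
    show Finset.image (fun x => x + 1) (Finset.image (fun x => x - 1) s) = s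
    rw [Finset.image_image]
    ext x
    simp only [Finset.mem_image, Function.comp_apply]
    constructor
    · rintro ⟨y, hy, rfl⟩
      have := Finset.mem_Icc.mp (hs hy)
      have hyx : y - 1 + 1 = y := by omega
      rwa [hyx]
    · intro hx
      have := Finset.mem_Icc.mp (hs hx)
      exact ⟨x, hx, by omega⟩
  · intro S hS
    rw [Finset.mem_powerset] at hS
    have hinj : Set.InjOn (· + 1) S := fun a _ b _ h => by
      simp only [add_left_inj] at h; exact h
    rw [Finset.sum_image (fun a ha b hb h => hinj ha hb h),
      Finset.card_image_of_injOn hinj]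
    simp only [eq_comm]

lemma min_subset_sum {n : ℕ} (s : Finset ℕ) (hs : s ⊆ Finset.Icc 1 n) :
    ∑ i ∈ Finset.range s.card, (i+1) ≤ ∑ i ∈ s, i := by
  obtain ⟨j, hj⟩ : ∃ j, s.card = j := ⟨_, rfl⟩
  rw [hj]
  induction j generalizing s with
  | zero => simp
  | succ j ih =>
    have hne : s.Nonempty := by rw [← Finset.card_pos, hj]; omega
    set m := s.max' hne with hm
    have hmem : m ∈ s := s.max'_mem hne
    have hcard : (s.erase m).card = j := by
      rw [Finset.card_erase_of_mem hmem, hj]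
      omega
    have hIH := ih (s.erase m) (fun x hx => hs (Finset.mem_of_mem_erase hx)) hcard
    have hjm : j + 1 ≤ m := by
      have hsub : s ⊆ Finset.Icc 1 m := by
        intro x hx
        rw [Finset.mem_Icc]
        exact ⟨(Finset.mem_Icc.mp (hs hx)).1, s.le_max' x hx⟩
      have := Finset.card_le_card hsub
      rw [hj, Nat.card_Icc] at this
      omega
    calc ∑ i ∈ Finset.range (j+1), (i+1) = (∑ i ∈ Finset.range j, (i+1)) + (j+1) :=
        Finset.sum_range_succ _ _
    _ ≤ (∑ i ∈ s.erase m, i) + m := add_le_add hIH hjm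
    _ = ∑ i ∈ s, i := Finset.sum_erase_add s _ hmem

lemma sum_range_succ_choose (j : ℕ) : ∑ i ∈ Finset.range j, (i+1) = (j+1).choose 2 := by
  induction j with
  | zero => simp
  | succ j ih =>
    rw [Finset.sum_range_succ, ih]
    have h1 : (j+2).choose 2 = (j+1).choose 1 + (j+1).choose 2 := Nat.choose_succ_succ (j+1) 1
    rw [h1, Nat.choose_one_right]
    omega

lemma D_lower {n j k : ℕ} (h : subsetSumCount n j k ≠ 0) : (j+1).choose 2 ≤ k := by
  rw [subsetSumCount] at h
  obtain ⟨s, hs⟩ := Finset.card_pos.mp (Nat.pos_of_ne_zero h)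
  rw [Finset.mem_filter, Finset.mem_powersetCard] at hs
  obtain ⟨⟨hsub, hcardj⟩, hsum⟩ := hs
  have := min_subset_sum s hsub
  rw [hcardj, hsum, sum_range_succ_choose] at this
  exact this

lemma D_zero (n k : ℕ) : subsetSumCount n 0 k = if k = 0 then 1 else 0 := by
  rw [subsetSumCount, Finset.powersetCard_zero]
  by_cases h : k = 0 <;> simp [h, Finset.filter_singleton, eq_comm]


lemma C0_natCast (a b : ℕ) : C0 (a : ℤ) (b : ℤ) = if b ≤ a then (a.choose b : ℤ) else 0 := by
  unfold C0
  rcases le_or_gt b a with h | h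
  · rw [if_pos ⟨Int.ofNat_nonneg b, by exact_mod_cast h⟩, if_pos h,
      Int.toNat_natCast, Int.toNat_natCast]
  · rw [if_neg (by omega), if_neg (not_le.mpr h)]

lemma C0_G_eq (n t k : ℕ) (hn : 1 ≤ n) (hk : k ≤ t) :
    C0 ((t:ℤ) - k + n) n - C0 ((t:ℤ) - k + n - 1) n
      = ((n - 1 + (t - k)).choose (n-1) : ℤ) := by
  obtain ⟨m, rfl⟩ : ∃ m, n = m + 1 := ⟨n - 1, by omega⟩
  rcases Nat.eq_or_lt_of_le hk with rfl | hlt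
  · have e1 : (k:ℤ) - k + ((m+1 : ℕ) : ℤ) = ((m+1 : ℕ) : ℤ) := by push_cast; ring
    have e2 : (k:ℤ) - k + ((m+1 : ℕ) : ℤ) - 1 = ((m : ℕ) : ℤ) := by push_cast; ring
    rw [e2, e1, C0_natCast, C0_natCast, if_pos le_rfl, if_neg (by omega)]
    simp [Nat.choose_self]
  · have e1 : (t:ℤ) - k + ((m+1 : ℕ) : ℤ) = ((t - k + m + 1 : ℕ) : ℤ) := by omega
    have e2 : (t:ℤ) - k + ((m+1 : ℕ) : ℤ) - 1 = ((t - k + m : ℕ) : ℤ) := by omega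
    rw [e2, e1, C0_natCast, C0_natCast, if_pos (by omega), if_pos (by omega)]
    obtain ⟨d, hd⟩ : ∃ d, t - k = d + 1 := ⟨t - k - 1, by omega⟩
    rw [show t - k + m + 1 = (d + m + 1) + 1 by omega,
      show t - k + m = d + m + 1 by omega,
      show m + 1 - 1 + (t - k) = d + m + 1 by omega,
      Nat.choose_succ_succ (d + m + 1) m]
    push_cast
    ring
lemma C0_G_zero (n t k : ℕ) (hk : t < k) :
    C0 ((t:ℤ) - k + n) n - C0 ((t:ℤ) - k + n - 1) n = 0 := by
  unfold C0
  rw [if_neg (by omega), if_neg (by omega)]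
  ring

lemma A_eq (n t : ℕ) (hn : 1 ≤ n) :
    ((n + t).choose t : ℤ) - C0 ((n:ℤ) + t - 1) ((t:ℤ) - 1)
      = ((n - 1 + t).choose (n-1) : ℤ) := by
  obtain ⟨m, rfl⟩ : ∃ m, n = m + 1 := ⟨n - 1, by omega⟩
  rcases Nat.eq_zero_or_pos t with rfl | ht
  · rw [show ((m+1:ℕ):ℤ) + (0:ℕ) - 1 = ((m:ℕ):ℤ) by push_cast; ring]
    unfold C0
    rw [if_neg (by omega)]
    simp [Nat.choose_self]
  · obtain ⟨e, rfl⟩ : ∃ e, t = e + 1 := ⟨t - 1, by omega⟩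
    have e1 : ((m+1:ℕ):ℤ) + ((e+1:ℕ):ℤ) - 1 = ((m + e + 1 : ℕ) : ℤ) := by push_cast; ring
    have e2 : ((e+1:ℕ):ℤ) - 1 = ((e : ℕ) : ℤ) := by push_cast; ring
    rw [e1, e2, C0_natCast, if_pos (by omega)]
    rw [show (m+1) + (e+1) = (m + e + 1) + 1 by omega,
      Nat.choose_succ_succ (m + e + 1) e,
      show m + 1 - 1 + (e + 1) = m + e + 1 by omega]
    have hsymm : (m + e + 1).choose (e + 1) = (m + e + 1).choose m := by
      rw [← Nat.choose_symm (by omega : e + 1 ≤ m + e + 1),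
        show m + e + 1 - (e + 1) = m by omega]
    rw [hsymm]
    push_cast
    ring

theorem invNum_eq (n t : ℕ) (hn : 1 ≤ n) (ht : t ≤ n.choose 2) :
    (invNum n t : ℤ) =
      ((n + t).choose t : ℤ) - C0 ((n : ℤ) + t - 1) ((t : ℤ) - 1) +
        ∑ j ∈ Finset.Icc 1 n, ∑ k ∈ Finset.Icc ((j + 1).choose 2) ((n + 1).choose 2),
          (-1) ^ j * (subsetSumCount n j k : ℤ) *
            (C0 ((t : ℤ) - k + n) n - C0 ((t : ℤ) - k + n - 1) n) := by
  have htcn : t ≤ (n+1).choose 2 := le_trans ht (Nat.choose_le_choose 2 (by omega))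
  have hL : (invNum n t : ℤ) = ∑ k ∈ Finset.range (t+1),
      ∑ j ∈ Finset.range (n+1), ((-1:ℤ)^j * (subsetSumCount n j k : ℤ))
        * ((n - 1 + (t - k)).choose (n-1) : ℤ) := by
    rw [invNum_eq_coeff, coeff_Qs n t hn]
    refine Finset.sum_congr rfl ?_
    intro k _
    rw [coeff_Rs_D, Finset.sum_mul]
  rw [hL, Finset.sum_comm]
  have hA : ((n + t).choose t : ℤ) - C0 ((n : ℤ) + t - 1) ((t : ℤ) - 1)
      = ∑ k ∈ Finset.range (t+1), ((-1:ℤ)^0 * (subsetSumCount n 0 k : ℤ))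
          * ((n - 1 + (t - k)).choose (n-1) : ℤ) := by
    rw [A_eq n t hn]
    rw [Finset.sum_eq_single 0 (fun k _ hk0 => by simp [D_zero, hk0])
      (fun h0 => absurd (Finset.mem_range.mpr (by omega)) h0)]
    simp [D_zero]
  have hstep : ∀ j ∈ Finset.Icc 1 n,
      ∑ k ∈ Finset.Icc ((j+1).choose 2) ((n+1).choose 2),
        (-1:ℤ)^j * (subsetSumCount n j k : ℤ)
          * (C0 ((t : ℤ) - k + n) n - C0 ((t : ℤ) - k + n - 1) n)
      = ∑ k ∈ Finset.range (t+1), ((-1:ℤ)^j * (subsetSumCount n j k : ℤ))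
          * ((n - 1 + (t - k)).choose (n-1) : ℤ) := by
    intro j _
    have h1 : ∑ k ∈ Finset.Icc ((j+1).choose 2) ((n+1).choose 2),
        (-1:ℤ)^j * (subsetSumCount n j k : ℤ)
          * (C0 ((t : ℤ) - k + n) n - C0 ((t : ℤ) - k + n - 1) n)
        = ∑ k ∈ Finset.range ((n+1).choose 2 + 1),
        (-1:ℤ)^j * (subsetSumCount n j k : ℤ)
          * (C0 ((t : ℤ) - k + n) n - C0 ((t : ℤ) - k + n - 1) n) := by
      refine Finset.sum_subset ?_ ?_
      · intro k hk
        rw [Finset.mem_Icc] at hk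
        rw [Finset.mem_range]
        omega
      · intro k hk hk2
        rw [Finset.mem_range] at hk
        rw [Finset.mem_Icc] at hk2
        push_neg at hk2
        have hD0 : subsetSumCount n j k = 0 := by
          by_contra hD
          have := D_lower hD
          have := hk2 this
          omega
        rw [hD0]
        push_cast
        ring
    have h2 : ∑ k ∈ Finset.range (t+1), ((-1:ℤ)^j * (subsetSumCount n j k : ℤ))
          * ((n - 1 + (t - k)).choose (n-1) : ℤ)
        = ∑ k ∈ Finset.range ((n+1).choose 2 + 1),
        (-1:ℤ)^j * (subsetSumCount n j k : ℤ)
          * (C0 ((t : ℤ) - k + n) n - C0 ((t : ℤ) - k + n - 1) n) := by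
      have h3 : ∀ k ∈ Finset.range (t+1),
          ((-1:ℤ)^j * (subsetSumCount n j k : ℤ))
            * ((n - 1 + (t - k)).choose (n-1) : ℤ)
          = (-1:ℤ)^j * (subsetSumCount n j k : ℤ)
            * (C0 ((t : ℤ) - k + n) n - C0 ((t : ℤ) - k + n - 1) n) := by
        intro k hk
        rw [Finset.mem_range] at hk
        rw [C0_G_eq n t k hn (by omega)]
      rw [Finset.sum_congr rfl h3]
      refine Finset.sum_subset ?_ ?_
      · intro k hk
        rw [Finset.mem_range] at hk ⊢
        omega
      · intro k hk hk2
        rw [Finset.mem_range] at hk hk2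
        rw [C0_G_zero n t k (by omega)]
        ring
    rw [h1, h2]
  rw [Finset.sum_congr rfl hstep, hA]
  rw [show Finset.range (n+1) = insert 0 (Finset.Icc 1 n) by ext x; simp; omega]
  rw [Finset.sum_insert (by simp)]
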